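/- (Spherical Jung-type bound for almost smooth bodies) Let M ⊂ ℝ^d, d ≥ 3, be a convex body such that for every boundary point b and any two outer unit normals n_i, n_j at b one has n_i · n_j ≥ (d−2)/(d−1). Then for every face F of M, the Gauss image ν(F) is contained in a closed spherical cap of angular radius arccos(√((d−1)/d)). -/

import Mathlib

open scoped RealInnerProductSpace

def IsFaceOf {d : ℕ} (K F : Set (EuclideanSpace ℝ (Fin d))) : Prop :=
  ∃ (n : EuclideanSpace ℝ (Fin d)) (c : ℝ), n ≠ 0 ∧ (∀ x ∈ K, ⟪n, x⟫ ≤ c) ∧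
    (∃ x ∈ K, ⟪n, x⟫ = c) ∧ F = {x ∈ K | ⟪n, x⟫ = c}

def gaussImage {d : ℕ} (K F : Set (EuclideanSpace ℝ (Fin d))) :
    Set (EuclideanSpace ℝ (Fin d)) :=
  {n | ‖n‖ = 1 ∧ ∃ c : ℝ, (∀ x ∈ K, ⟪n, x⟫ ≤ c) ∧ ∀ y ∈ F, ⟪n, y⟫ = c}

/-- `n` is an outer unit normal of a supporting hyperplane of `M` at `b`. -/
def IsOuterUnitNormalAt {d : ℕ} (M : Set (EuclideanSpace ℝ (Fin d)))
    (b n : EuclideanSpace ℝ (Fin d)) : Prop :=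
  ‖n‖ = 1 ∧ ∀ x ∈ M, ⟪n, x⟫ ≤ ⟪n, b⟫

private lemma sum_dite_pad {α : Type*} [AddCommMonoid α] {k N : ℕ} (hk : k ≤ N) (g : Fin k → α) :
    (∑ j : Fin N, if h : (j : ℕ) < k then g ⟨j, h⟩ else 0) = ∑ i : Fin k, g i := by
  classical
  rw [Fin.sum_univ_eq_sum_range (fun j => if h : j < k then g ⟨j, h⟩ else 0) N,
    ← Finset.sum_subset (Finset.range_subset_range.2 hk)
      (fun x _ hx => dif_neg (by simpa using hx)),
    ← Fin.sum_univ_eq_sum_range (fun j => if h : j < k then g ⟨j, h⟩ else 0) k]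
  exact Finset.sum_congr rfl fun i _ => by rw [dif_pos i.isLt]

private lemma isCompact_convexHull_aux {d : ℕ} {A : Set (EuclideanSpace ℝ (Fin d))}
    (hA : IsCompact A) : IsCompact (convexHull ℝ A) := by
  classical
  rcases A.eq_empty_or_nonempty with rfl | ⟨a₀, ha₀⟩
  · simp
  set N := d + 1 with hN
  set f : (Fin N → ℝ) × (Fin N → EuclideanSpace ℝ (Fin d)) → EuclideanSpace ℝ (Fin d) :=
    fun q => ∑ j, q.1 j • q.2 j with hf
  have hfc : Continuous f := continuous_finset_sum _ fun j _ =>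
    (((continuous_apply j).comp continuous_fst).smul ((continuous_apply j).comp continuous_snd))
  have hT : IsCompact ((stdSimplex ℝ (Fin N)) ×ˢ Set.univ.pi fun _ : Fin N => A) :=
    (isCompact_stdSimplex _ _).prod (isCompact_univ_pi fun _ => hA)
  have himg : f '' ((stdSimplex ℝ (Fin N)) ×ˢ Set.univ.pi fun _ : Fin N => A)
      = convexHull ℝ A := by
    apply Set.Subset.antisymm
    · rintro x ⟨⟨w, z⟩, ⟨⟨hw0, hw1⟩, hz⟩, rfl⟩
      have := Finset.centerMass_mem_convexHull (Finset.univ : Finset (Fin N))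
        (fun i _ => hw0 i) (by rw [hw1]; norm_num) (fun i _ => hz i (Set.mem_univ i))
      rwa [Finset.centerMass_eq_of_sum_1 _ _ hw1] at this
    · intro p hp
      obtain ⟨ι, hfin, z, w, hzA, hind, hwpos, hw1, hrep⟩ :=
        eq_pos_convex_span_of_mem_convexHull hp
      letI := hfin
      have hk : Fintype.card ι ≤ N := by
        have h1 := hind.card_le_finrank_succ
        have h2 : Module.finrank ℝ (vectorSpan ℝ (Set.range z))
            ≤ Module.finrank ℝ (EuclideanSpace ℝ (Fin d)) := Submodule.finrank_le _
        rw [finrank_euclideanSpace, Fintype.card_fin] at h2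
        omega
      set k := Fintype.card ι with hkdef
      let e : ι ≃ Fin k := Fintype.equivFin ι
      refine ⟨(fun j => if h : (j : ℕ) < k then w (e.symm ⟨j, h⟩) else 0,
               fun j => if h : (j : ℕ) < k then z (e.symm ⟨j, h⟩) else a₀),
        ⟨⟨fun j => ?_, ?_⟩, fun j _ => ?_⟩, ?_⟩
      · dsimp only
        split
        · exact (hwpos _).le
        · exact le_rfl
      · dsimp only
        rw [sum_dite_pad hk (fun i => w (e.symm i)), Equiv.sum_comp e.symm w]
        exact hw1
      · dsimp only
        split
        · exact hzA (Set.mem_range_self _)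
        · exact ha₀
      · show (∑ j : Fin N, ((if h : (j : ℕ) < k then w (e.symm ⟨j, h⟩) else 0) •
            (if h : (j : ℕ) < k then z (e.symm ⟨j, h⟩) else a₀))) = p
        have hterm : ∀ j : Fin N,
            ((if h : (j : ℕ) < k then w (e.symm ⟨j, h⟩) else 0) •
              (if h : (j : ℕ) < k then z (e.symm ⟨j, h⟩) else a₀))
            = if h : (j : ℕ) < k then w (e.symm ⟨j, h⟩) • z (e.symm ⟨j, h⟩) else 0 := by
          intro j; by_cases h : (j : ℕ) < k <;> simp [h]
        rw [Finset.sum_congr rfl fun j _ => hterm j,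
          sum_dite_pad hk (fun i => w (e.symm i) • z (e.symm i)),
          Equiv.sum_comp e.symm (fun i => w i • z i)]
        exact hrep
  rw [← himg]
  exact hT.image hfc

set_option maxHeartbeats 1000000 in
private lemma jung_aux {d : ℕ} (hd : 3 ≤ d) (A : Set (EuclideanSpace ℝ (Fin d)))
    (hA : IsCompact A) (hne : A.Nonempty)
    (hnorm : ∀ n ∈ A, ‖n‖ = 1)
    (hpair : ∀ ni ∈ A, ∀ nj ∈ A, ((d : ℝ) - 2) / ((d : ℝ) - 1) ≤ ⟪ni, nj⟫) :
    ∃ c : EuclideanSpace ℝ (Fin d), ‖c‖ = 1 ∧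
      ∀ n ∈ A, Real.sqrt (((d : ℝ) - 1) / d) ≤ ⟪c, n⟫ := by
  classical
  have hd3 : (3 : ℝ) ≤ (d : ℝ) := by exact_mod_cast hd
  set α : ℝ := ((d : ℝ) - 2) / ((d : ℝ) - 1) with hα
  have hd1 : (0 : ℝ) < (d : ℝ) - 1 := by linarith
  have hd0 : (0 : ℝ) < (d : ℝ) := by linarith
  have hα0 : 0 < α := div_pos (by linarith) hd1
  have hα1 : α < 1 := by
    rw [hα, div_lt_one hd1]; linarith
  have hKc : IsCompact (convexHull ℝ A) := isCompact_convexHull_aux hA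
  have hKconv : Convex ℝ (convexHull ℝ A) := convex_convexHull ℝ A
  have hKne : (convexHull ℝ A).Nonempty := hne.mono (subset_convexHull ℝ A)
  obtain ⟨p, hpK, hpmin⟩ := hKc.exists_isMinOn hKne continuous_norm.continuousOn
  haveI : Nonempty (convexHull ℝ A) := ⟨⟨p, hpK⟩⟩
  -- variational inequality
  have hbdd : BddBelow (Set.range fun q : convexHull ℝ A =>
      ‖(0 : EuclideanSpace ℝ (Fin d)) - (q : EuclideanSpace ℝ (Fin d))‖) := by
    refine ⟨0, ?_⟩
    rintro x ⟨q, rfl⟩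
    exact norm_nonneg _
  have hmin' : ‖(0 : EuclideanSpace ℝ (Fin d)) - p‖
      = ⨅ q : convexHull ℝ A, ‖(0 : EuclideanSpace ℝ (Fin d)) - q‖ := by
    refine le_antisymm (le_ciInf fun q => ?_) (ciInf_le hbdd ⟨p, hpK⟩)
    simpa [zero_sub] using hpmin q.2
  have hvar : ∀ n ∈ convexHull ℝ A, ‖p‖ ^ 2 ≤ ⟪p, n⟫ := by
    intro n hn
    have h := (norm_eq_iInf_iff_real_inner_le_zero hKconv hpK).1 hmin' n hn
    have h2 : ⟪(0 : EuclideanSpace ℝ (Fin d)) - p, n - p⟫ = ⟪p, p⟫ - ⟪p, n⟫ := by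
      rw [zero_sub, inner_neg_left, inner_sub_right]; ring
    rw [h2] at h
    rw [← real_inner_self_eq_norm_sq]
    linarith
  -- Caratheodory representation of p with positive weights
  obtain ⟨ι, hfin, z, w, hzA, hind, hwpos, hw1, hrep⟩ :=
    eq_pos_convex_span_of_mem_convexHull hpK
  letI := hfin
  haveI hιne : Nonempty ι := by
    rcases isEmpty_or_nonempty ι with h | h
    · rw [Finset.univ_eq_empty, Finset.sum_empty] at hw1; norm_num at hw1
    · exact h
  have hzA' : ∀ i, z i ∈ A := fun i => hzA (Set.mem_range_self i)
  have hz1 : ∀ i, ⟪z i, z i⟫ = 1 := fun i => by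
    rw [real_inner_self_eq_norm_sq, hnorm _ (hzA' i)]; norm_num
  have hge : ∀ i, ‖p‖ ^ 2 ≤ ⟪p, z i⟫ := fun i =>
    hvar (z i) (subset_convexHull ℝ A (hzA' i))
  have hdouble : ‖p‖ ^ 2 = ∑ i, ∑ j, (w i * w j) * ⟪z i, z j⟫ := by
    rw [← real_inner_self_eq_norm_sq, ← hrep, sum_inner]
    refine Finset.sum_congr rfl fun i _ => ?_
    rw [real_inner_smul_left, inner_sum, Finset.mul_sum]
    refine Finset.sum_congr rfl fun j _ => ?_
    rw [real_inner_smul_right]; ring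
  have hww : ∀ i j : ι, 0 ≤ w i * w j := fun i j => mul_nonneg (hwpos i).le (hwpos j).le
  -- p ≠ 0
  have hsum_ww : ∑ i, ∑ j : ι, w i * w j = 1 := by
    rw [← Finset.sum_mul_sum, hw1, one_mul]
  have hp2α : α ≤ ‖p‖ ^ 2 := by
    rw [hdouble, ← one_mul α, ← hsum_ww, Finset.sum_mul]
    refine Finset.sum_le_sum fun i _ => ?_
    rw [Finset.sum_mul]
    refine Finset.sum_le_sum fun j _ => ?_
    have h := mul_le_mul_of_nonneg_left (hpair _ (hzA' i) _ (hzA' j)) (hww i j)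
    linarith
  have hpne : p ≠ 0 := by
    intro h
    rw [h, norm_zero] at hp2α
    norm_num at hp2α
    linarith
  have hpnorm_pos : 0 < ‖p‖ := norm_pos_iff.2 hpne
  -- each touching point lies on the hyperplane
  have heq : ∀ i, ⟪p, z i⟫ = ‖p‖ ^ 2 := by
    have hsum0 : ∑ i, w i * (⟪p, z i⟫ - ‖p‖ ^ 2) = 0 := by
      have h1 : ∑ i, w i * ⟪p, z i⟫ = ‖p‖ ^ 2 := by
        rw [← real_inner_self_eq_norm_sq]
        conv_rhs => rw [show ⟪p, p⟫ = ⟪p, ∑ i, w i • z i⟫ by rw [hrep]]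
        rw [inner_sum]
        exact Finset.sum_congr rfl fun i _ => by rw [real_inner_smul_right]
      have h2 : ∑ i, w i * ‖p‖ ^ 2 = ‖p‖ ^ 2 := by
        rw [← Finset.sum_mul, hw1, one_mul]
      simp only [mul_sub]
      rw [Finset.sum_sub_distrib, h1, h2, sub_self]
    intro i
    have := (Finset.sum_eq_zero_iff_of_nonneg
      (fun i _ => mul_nonneg (hwpos i).le (by linarith [hge i]))).1 hsum0 i (Finset.mem_univ i)
    have hwi := hwpos i
    have : ⟪p, z i⟫ - ‖p‖ ^ 2 = 0 := by
      rcases mul_eq_zero.1 this with h | h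
      · exact absurd h (ne_of_gt hwi)
      · exact h
    linarith
  -- cardinality bound via the hyperplane
  have hcard : Fintype.card ι ≤ d := by
    set K₀ : Submodule ℝ (EuclideanSpace ℝ (Fin d)) := LinearMap.ker ((innerSL ℝ p : EuclideanSpace ℝ (Fin d) →L[ℝ] ℝ) : EuclideanSpace ℝ (Fin d) →ₗ[ℝ] ℝ) with hK₀
    have hspan : vectorSpan ℝ (Set.range z) ≤ K₀ := by
      rw [vectorSpan_def, Submodule.span_le]
      rintro v ⟨a, ⟨i, rfl⟩, b, ⟨j, rfl⟩, rfl⟩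
      simp only [SetLike.mem_coe, hK₀, LinearMap.mem_ker]
      have : ⟪p, z i -ᵥ z j⟫ = 0 := by
        rw [vsub_eq_sub, inner_sub_right, heq i, heq j, sub_self]
      simpa using this
    have hK₀lt : K₀ < ⊤ := by
      rw [lt_top_iff_ne_top]
      intro h
      have hp_mem : p ∈ K₀ := h ▸ Submodule.mem_top
      have : ⟪p, p⟫ = 0 := by simpa [hK₀] using hp_mem
      rw [real_inner_self_eq_norm_sq] at this
      nlinarith
    have h1 : Module.finrank ℝ K₀ < d := by
      have := Submodule.finrank_lt hK₀lt.ne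
      rwa [finrank_euclideanSpace, Fintype.card_fin] at this
    have h2 : Module.finrank ℝ (vectorSpan ℝ (Set.range z)) + 1 = Fintype.card ι :=
      hind.finrank_vectorSpan_add_one
    have h3 : Module.finrank ℝ (vectorSpan ℝ (Set.range z)) ≤ Module.finrank ℝ K₀ :=
      Submodule.finrank_mono hspan
    omega
  -- the refined bound
  set s : ℝ := ∑ i, (w i) ^ 2 with hs
  have hs_ge : 1 ≤ (d : ℝ) * s := by
    have h1 : (1 : ℝ) ≤ (Fintype.card ι : ℝ) * s := by
      have h := sq_sum_le_card_mul_sum_sq (s := (Finset.univ : Finset ι)) (f := w)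
      rw [hw1] at h
      simpa [Finset.card_univ] using h
    have h2 : (Fintype.card ι : ℝ) ≤ (d : ℝ) := by exact_mod_cast hcard
    have hs0 : 0 ≤ s := Finset.sum_nonneg fun i _ => sq_nonneg _
    nlinarith
  have e1' : (∑ i, ∑ j : ι, α * (w i * w j)) = α * ∑ i, ∑ j : ι, w i * w j := by
    rw [Finset.mul_sum]
    exact Finset.sum_congr rfl fun i _ => (Finset.mul_sum _ _ _).symm
  have e1 : ∑ i, ∑ j : ι, α * (w i * w j) = α := by
    rw [e1', hsum_ww, mul_one]
  have e2 : ∑ i, ∑ j : ι, (if i = j then (1 - α) * (w i * w j) else 0) = (1 - α) * s := by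
    have h : ∀ i : ι, ∑ j : ι, (if i = j then (1 - α) * (w i * w j) else 0)
        = (1 - α) * (w i * w i) := fun i => by simp [Finset.sum_ite_eq]
    rw [Finset.sum_congr rfl fun i _ => h i, ← Finset.mul_sum, hs]
    congr 1
    exact Finset.sum_congr rfl fun i _ => by ring
  have hmain : α + (1 - α) * s ≤ ‖p‖ ^ 2 := by
    have key : ∀ i j : ι, α * (w i * w j) + (if i = j then (1 - α) * (w i * w j) else 0)
        ≤ (w i * w j) * ⟪z i, z j⟫ := by
      intro i j
      by_cases h : i = j
      · subst h
        rw [if_pos rfl, hz1 i]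
        ring_nf
        exact le_rfl
      · rw [if_neg h, add_zero, mul_comm α (w i * w j)]
        exact mul_le_mul_of_nonneg_left (hpair _ (hzA' i) _ (hzA' j)) (hww i j)
    have hle : ∑ i, ∑ j, (α * (w i * w j) + (if i = j then (1 - α) * (w i * w j) else 0))
        ≤ ∑ i, ∑ j, (w i * w j) * ⟪z i, z j⟫ :=
      Finset.sum_le_sum fun i _ => Finset.sum_le_sum fun j _ => key i j
    have hexp : ∑ i, ∑ j, (α * (w i * w j) + (if i = j then (1 - α) * (w i * w j) else 0))
        = α + (1 - α) * s := by
      simp_rw [Finset.sum_add_distrib]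
      rw [e1, e2]
    rw [hdouble]
    linarith
  have hsge' : 1 / (d : ℝ) ≤ s := by
    rw [div_le_iff₀ hd0]
    linarith [hs_ge]
  have hfinal : ((d : ℝ) - 1) / d ≤ ‖p‖ ^ 2 := by
    have h1 : α + (1 - α) * (1 / (d : ℝ)) ≤ α + (1 - α) * s := by
      have hpos : (0 : ℝ) < 1 - α := by linarith
      nlinarith
    have h2 : α + (1 - α) * (1 / (d : ℝ)) = ((d : ℝ) - 1) / d := by
      rw [hα]
      field_simp
      ring
    linarith
  refine ⟨‖p‖⁻¹ • p, ?_, ?_⟩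
  · rw [norm_smul, norm_inv, norm_norm, inv_mul_cancel₀ (ne_of_gt hpnorm_pos)]
  · intro n hn
    have h1 : ‖p‖ ^ 2 ≤ ⟪p, n⟫ := hvar n (subset_convexHull ℝ A hn)
    rw [real_inner_smul_left]
    have h2 : Real.sqrt (((d : ℝ) - 1) / d) ≤ ‖p‖ := by
      rw [show ‖p‖ = Real.sqrt (‖p‖ ^ 2) from (Real.sqrt_sq hpnorm_pos.le).symm]
      exact Real.sqrt_le_sqrt hfinal
    have h3 : ‖p‖ ≤ ‖p‖⁻¹ * ⟪p, n⟫ := by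
      have h4 := mul_le_mul_of_nonneg_left h1 (inv_nonneg.2 hpnorm_pos.le)
      have h5 : ‖p‖⁻¹ * ‖p‖ ^ 2 = ‖p‖ := by
        field_simp
      linarith
    linarith

set_option maxHeartbeats 1000000 in
theorem gauss_image_in_cap_of_almost_smooth {d : ℕ} (hd : 3 ≤ d)
    (M : Set (EuclideanSpace ℝ (Fin d)))
    (hMc : IsCompact M) (hMconv : Convex ℝ M) (hMint : (interior M).Nonempty)
    (hAS : ∀ b ∈ frontier M, ∀ ni nj : EuclideanSpace ℝ (Fin d),
      IsOuterUnitNormalAt M b ni → IsOuterUnitNormalAt M b nj →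
      ((d : ℝ) - 2) / ((d : ℝ) - 1) ≤ ⟪ni, nj⟫)
    (F : Set (EuclideanSpace ℝ (Fin d))) (hF : IsFaceOf M F) :
    ∃ c : EuclideanSpace ℝ (Fin d), ‖c‖ = 1 ∧
      ∀ n ∈ gaussImage M F, Real.sqrt (((d : ℝ) - 1) / d) ≤ ⟪c, n⟫ := by
  classical
  obtain ⟨n₀, c₀, hn₀, hsup, ⟨b, hbM, hbe⟩, hFeq⟩ := hF
  have hbF : b ∈ F := by rw [hFeq]; exact ⟨hbM, hbe⟩
  have hn₀pos : 0 < ‖n₀‖ := norm_pos_iff.2 hn₀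
  -- b is a boundary point
  have hbfr : b ∈ frontier M := by
    rw [hMc.isClosed.frontier_eq]
    refine ⟨hbM, fun hbi => ?_⟩
    rcases Metric.isOpen_iff.1 isOpen_interior b hbi with ⟨ε, hε, hball⟩
    set t : ℝ := ε / (2 * ‖n₀‖) with ht
    have htpos : 0 < t := div_pos hε (by positivity)
    have hx : b + t • n₀ ∈ M := by
      apply interior_subset
      apply hball
      rw [Metric.mem_ball, dist_eq_norm, add_sub_cancel_left, norm_smul,
        Real.norm_eq_abs, abs_of_pos htpos, ht]
      have h5 : ε / (2 * ‖n₀‖) * ‖n₀‖ = ε / 2 := by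
        field_simp
      rw [h5]
      linarith
    have hcon := hsup _ hx
    rw [inner_add_right, real_inner_smul_right, hbe, real_inner_self_eq_norm_sq] at hcon
    nlinarith [mul_pos htpos (pow_pos hn₀pos 2)]
  -- every element of the Gauss image is an outer unit normal at b
  have houter : ∀ n ∈ gaussImage M F, IsOuterUnitNormalAt M b n := by
    rintro n ⟨hn1, c, hc1, hc2⟩
    exact ⟨hn1, fun x hx => by rw [hc2 b hbF]; exact hc1 x hx⟩
  set G : Set (EuclideanSpace ℝ (Fin d)) := gaussImage M F with hG
  have hpairG : ∀ ni ∈ G, ∀ nj ∈ G, ((d : ℝ) - 2) / ((d : ℝ) - 1) ≤ ⟪ni, nj⟫ :=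
    fun ni hi nj hj => hAS b hbfr ni nj (houter _ hi) (houter _ hj)
  have hGnorm : ∀ n ∈ G, ‖n‖ = 1 := fun n hn => hn.1
  have hGne : G.Nonempty := by
    refine ⟨‖n₀‖⁻¹ • n₀, ?_, ‖n₀‖⁻¹ * c₀, fun x hx => ?_, fun y hy => ?_⟩
    · rw [norm_smul, norm_inv, norm_norm, inv_mul_cancel₀ (ne_of_gt hn₀pos)]
    · rw [real_inner_smul_left]
      exact mul_le_mul_of_nonneg_left (hsup x hx) (inv_nonneg.2 hn₀pos.le)
    · rw [real_inner_smul_left]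
      have : ⟪n₀, y⟫ = c₀ := (hFeq ▸ hy).2
      rw [this]
  -- pass to the closure, which is compact
  set A : Set (EuclideanSpace ℝ (Fin d)) := closure G with hA
  have hGball : G ⊆ Metric.closedBall 0 1 := fun n hn => by
    rw [Metric.mem_closedBall, dist_zero_right, hGnorm n hn]
  have hAc : IsCompact A :=
    IsCompact.of_isClosed_subset (isCompact_closedBall _ _) isClosed_closure
      (closure_minimal hGball Metric.isClosed_closedBall)
  have hAne : A.Nonempty := hGne.mono subset_closure
  have hAnorm : ∀ n ∈ A, ‖n‖ = 1 := fun n hn =>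
    closure_minimal (fun m hm => hGnorm m hm) (isClosed_eq continuous_norm continuous_const) hn
  have hApair : ∀ ni ∈ A, ∀ nj ∈ A, ((d : ℝ) - 2) / ((d : ℝ) - 1) ≤ ⟪ni, nj⟫ := by
    intro ni hi nj hj
    have hS : IsClosed {q : EuclideanSpace ℝ (Fin d) × EuclideanSpace ℝ (Fin d) |
        ((d : ℝ) - 2) / ((d : ℝ) - 1) ≤ ⟪q.1, q.2⟫} :=
      isClosed_le continuous_const (Continuous.inner continuous_fst continuous_snd)
    have hsub : G ×ˢ G ⊆ {q : EuclideanSpace ℝ (Fin d) × EuclideanSpace ℝ (Fin d) |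
        ((d : ℝ) - 2) / ((d : ℝ) - 1) ≤ ⟪q.1, q.2⟫} := by
      rintro ⟨x, y⟩ ⟨hx, hy⟩
      exact hpairG x hx y hy
    have hmem : (ni, nj) ∈ closure (G ×ˢ G) := by
      rw [closure_prod_eq]
      exact ⟨hi, hj⟩
    exact closure_minimal hsub hS hmem
  obtain ⟨c, hc1, hc2⟩ := jung_aux hd A hAc hAne hAnorm hApair
  exact ⟨c, hc1, fun n hn => hc2 n (subset_closure hn)⟩
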